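/- Let f ∈ ℂ[[x₁,…,x_n]] have order k (i.e., f ∈ m^k \ m^(k+1), m the maximal ideal). Assign weights wt(xᵢ) ∈ V to the variables (V a vector space over ℚ), and suppose f is homogeneous of weight 0. Let W = {wt(x₁),…,wt(x_n)} (with multiplicity recorded by d(α) = #{i : wt(xᵢ) = α}), and let C ⊆ W be a subset such that for all l ≥ k−1 the l-fold sumset of C is disjoint from −W. Then for every i, the partial derivative ∂f/∂xᵢ contains no monomial that is a product only of variables x_j with wt(x_j) ∈ C; consequently every ∂f/∂xᵢ vanishes identically on the linear subspace {x_j = 0 : wt(x_j) ∉ C}. -/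

import Mathlib

/-- The formal partial derivative `∂/∂xᵢ` of a multivariate formal power series. -/
noncomputable def psDeriv {n : ℕ} {K : Type*} [CommRing K] (i : Fin n)
    (f : MvPowerSeries (Fin n) K) : MvPowerSeries (Fin n) K :=
  fun a => ((a i : K) + 1) * MvPowerSeries.coeff (a + Finsupp.single i 1) f

/-- The weight of a monomial `x^a` with respect to weights `wt` of the variables. -/
def monWeight {n : ℕ} {Q : Type*} [AddCommGroup Q] (wt : Fin n → Q)
    (a : Fin n →₀ ℕ) : Q :=
  a.sum fun i m => m • wt i

/-- A power series is homogeneous of weight `χ` if every monomial appearing with nonzero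
coefficient has weight `χ`. -/
def IsWtHomog {n : ℕ} {K Q : Type*} [CommRing K] [AddCommGroup Q] (wt : Fin n → Q)
    (χ : Q) (f : MvPowerSeries (Fin n) K) : Prop :=
  ∀ a : Fin n →₀ ℕ, MvPowerSeries.coeff a f ≠ 0 → monWeight wt a = χ

/-- The sum of the multiset of weights of a monomial equals its weight. -/
lemma toMultiset_map_sum {n : ℕ} {Q : Type*} [AddCommGroup Q] (wt : Fin n → Q)
    (a : Fin n →₀ ℕ) : (a.toMultiset.map wt).sum = monWeight wt a := by
  rw [Finsupp.toMultiset_map, Finsupp.sum_toMultiset]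
  rw [monWeight, Finsupp.sum_mapDomain_index] <;> simp [add_smul]

/-- Core combinatorial step: if `f ∈ ℂ[[x]]` has order `k`, is homogeneous of weight `0`,
and `C` is a set of weights whose `l`-fold sumsets (`l ≥ k-1`) avoid `-W`, then no partial
derivative of `f` contains a monomial built only from variables with weights in `C`. -/
theorem no_monomial_in_C_variables (n : ℕ) (V : Type*) [AddCommGroup V] [Module ℚ V]
    (wt : Fin n → V) (f : MvPowerSeries (Fin n) ℂ) (k : ℕ)
    (hord : ∀ a : Fin n →₀ ℕ, MvPowerSeries.coeff a f ≠ 0 → k ≤ a.sum fun _ m => m)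
    (hordk : ∃ a : Fin n →₀ ℕ, MvPowerSeries.coeff a f ≠ 0 ∧ (a.sum fun _ m => m) = k)
    (hhom : IsWtHomog wt 0 f)
    (C : Set V) (hC : C ⊆ Set.range wt)
    (hsum : ∀ l : ℕ, k - 1 ≤ l → ∀ c : Fin l → V, (∀ i, c i ∈ C) →
      ∀ j : Fin n, (∑ i, c i) ≠ -(wt j)) :
    ∀ (i : Fin n) (a : Fin n →₀ ℕ), (∀ j ∈ a.support, wt j ∈ C) →
      MvPowerSeries.coeff a (psDeriv i f) = 0 := by
  intro i a hsupp
  by_contra h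
  have hcoeff : MvPowerSeries.coeff (a + Finsupp.single i 1) f ≠ 0 := by
    intro h0
    apply h
    show ((a i : ℂ) + 1) * MvPowerSeries.coeff (a + Finsupp.single i 1) f = 0
    rw [h0, mul_zero]
  set b := a + Finsupp.single i 1 with hb
  -- degree bound
  have hdegb : k ≤ b.sum fun _ m => m := hord b hcoeff
  have hdegb' : (b.sum fun _ m => m) = (a.sum fun _ m => m) + 1 := by
    rw [hb, Finsupp.sum_add_index' (by simp) (fun _ _ _ => rfl)]
    simp
  have hdega : k - 1 ≤ a.sum fun _ m => m := by omega
  -- weight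
  have hwb : monWeight wt b = 0 := hhom b hcoeff
  have hwadd : monWeight wt b = monWeight wt a + wt i := by
    rw [hb, monWeight, Finsupp.sum_add_index' (by simp) (fun _ m₁ m₂ => add_smul m₁ m₂ _)]
    rw [monWeight, Finsupp.sum_single_index (by simp), one_smul]
  have hwa : monWeight wt a = -(wt i) := by
    rw [hwadd] at hwb
    exact eq_neg_of_add_eq_zero_left hwb
  -- build the sequence c
  set L := (a.toMultiset.map wt).toList with hL
  have hLsum : L.sum = monWeight wt a := by
    rw [hL, Multiset.sum_toList, toMultiset_map_sum]
  have hLlen : L.length = a.sum fun _ m => m := by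
    rw [hL]
    rw [show (Multiset.map wt a.toMultiset).toList.length
        = Multiset.card (Multiset.map wt a.toMultiset) from Multiset.length_toList _]
    rw [Multiset.card_map, Finsupp.card_toMultiset]
    rfl
  have hlen : k - 1 ≤ L.length := by omega
  refine hsum L.length hlen (fun j => L[j.1]) ?_ i ?_
  · intro j
    have hmem : L[j.1] ∈ (a.toMultiset.map wt) := by
      rw [← Multiset.mem_toList]
      exact List.getElem_mem _
    obtain ⟨x, hx, hxe⟩ := Multiset.mem_map.mp hmem
    simp only [Fin.getElem_fin] at *
    rw [← hxe]
    exact hsupp x ((Finsupp.mem_toMultiset a x).mp hx)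
  · rw [Fin.sum_univ_getElem, hLsum, hwa]
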